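/- Let $M$ graphs have vertex feature vectors collected as the columns of $\Phi \in \mathbb{R}^{m \times N}$, where $N = \sum_{g=1}^M n_g$ and the columns are grouped consecutively by graph. Let $K = \Phi^\top\Phi$, let $u_1,\ldots,u_P$ be orthonormal eigenvectors of $K$ with eigenvalues $\lambda_1,\ldots,\lambda_P > 0$ with $P = \mathrm{rank}(K)$, let $Q = [\lambda_1^{1/2}u_1,\ldots,\lambda_P^{1/2}u_P] \in \mathbb{R}^{N \times P}$, and for each graph $g$ let $Q_g \in \mathbb{R}^{n_g \times P}$ be the block of rows of $Q$ corresponding to graph $g$ and $\Phi_g$ the corresponding block of columns of $\Phi$. Let $L_g$ be symmetric positive definite $n_g \times n_g$ matrices and $\gamma > 0$, and set $S_g = \Phi_g L_g^{-1}\Phi_g^\top + \gamma I_m$ and $\bar S_g = Q_g^\top L_g^{-1} Q_g + \gamma I_P$. Then for every pair of graphs $i, j$: $\det\big((\tfrac{1}{2}S_i^{-1} + \tfrac{1}{2}S_j^{-1})^{-1}\big)^{1/2} \big/ \big(\det(S_i)^{1/4}\det(S_j)^{1/4}\big) = \det\big((\tfrac{1}{2}\bar S_i^{-1} + \tfrac{1}{2}\bar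 S_j^{-1})^{-1}\big)^{1/2} \big/ \big(\det(\bar S_i)^{1/4}\det(\bar S_j)^{1/4}\big)$. -/

import Mathlib

open Matrix

/-- The Laplacian graph kernel value between two (positive definite) matrices. -/
noncomputable def lgKernel {k : Type*} [Fintype k] [DecidableEq k]
    (A B : Matrix k k ℝ) : ℝ :=
  (((1 / 2 : ℝ) • A⁻¹ + (1 / 2 : ℝ) • B⁻¹)⁻¹).det ^ ((1 : ℝ) / 2) /
    (A.det ^ ((1 : ℝ) / 4) * B.det ^ ((1 : ℝ) / 4))

section AuxLemmas

/-- Determinant identity for conjugation by a matrix with orthonormal columns. -/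
private lemma det_conj_aux {m P : ℕ} (Ξ : Matrix (Fin m) (Fin P) ℝ)
    (hΞ : Ξᵀ * Ξ = 1) (B : Matrix (Fin P) (Fin P) ℝ) (c : ℝ) (hc : c ≠ 0) :
    (Ξ * B * Ξᵀ + c • 1).det * c ^ P = (B + c • 1).det * c ^ m := by
  have h1 : Ξ * B * Ξᵀ + c • (1 : Matrix (Fin m) (Fin m) ℝ)
      = c • ((1 : Matrix (Fin m) (Fin m) ℝ) + Ξ * (c⁻¹ • B) * Ξᵀ) := by
    rw [smul_add, Matrix.mul_smul, Matrix.smul_mul, smul_smul, mul_inv_cancel₀ hc, one_smul,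
      add_comm]
  have h2 : B + c • (1 : Matrix (Fin P) (Fin P) ℝ)
      = c • ((1 : Matrix (Fin P) (Fin P) ℝ) + c⁻¹ • B) := by
    rw [smul_add, smul_smul, mul_inv_cancel₀ hc, one_smul, add_comm]
  rw [h1, h2, Matrix.det_smul, Matrix.det_smul, Matrix.det_one_add_mul_comm,
    ← Matrix.mul_assoc, hΞ, Matrix.one_mul]
  simp [Fintype.card_fin]
  ring

/-- Inverse identity for conjugation by a matrix with orthonormal columns. -/
private lemma inv_conj_aux {m P : ℕ} (Ξ : Matrix (Fin m) (Fin P) ℝ) (hΞ : Ξᵀ * Ξ = 1)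
    (A : Matrix (Fin P) (Fin P) ℝ) (γ : ℝ) (hγ : γ ≠ 0)
    (hinv : IsUnit (A + γ • (1 : Matrix (Fin P) (Fin P) ℝ)).det) :
    (Ξ * A * Ξᵀ + γ • 1)⁻¹
      = Ξ * ((A + γ • 1)⁻¹ - γ⁻¹ • 1) * Ξᵀ + γ⁻¹ • 1 := by
  have hC : (A + γ • 1) * (A + γ • 1)⁻¹ = 1 := Matrix.mul_nonsing_inv _ hinv
  set C := (A + γ • (1 : Matrix (Fin P) (Fin P) ℝ))⁻¹ with hCdef
  apply Matrix.inv_eq_right_inv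
  have hkey : A * (C - γ⁻¹ • 1) + γ⁻¹ • A + γ • (C - γ⁻¹ • 1) = 0 := by
    have h1 : A * C + γ • C = 1 := by
      rw [← hC, add_mul, Matrix.smul_mul, one_mul]
    rw [mul_sub, smul_sub, Matrix.mul_smul, mul_one, smul_smul, mul_inv_cancel₀ hγ, one_smul]
    calc A * C - γ⁻¹ • A + γ⁻¹ • A + (γ • C - 1)
        = (A * C + γ • C) - 1 := by abel
      _ = 0 := by rw [h1, sub_self]
  have hcancel : ∀ X : Matrix (Fin P) (Fin m) ℝ, Ξᵀ * (Ξ * X) = X := fun X => by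
    rw [← Matrix.mul_assoc, hΞ, Matrix.one_mul]
  calc (Ξ * A * Ξᵀ + γ • 1) * (Ξ * (C - γ⁻¹ • 1) * Ξᵀ + γ⁻¹ • 1)
      = Ξ * (A * (C - γ⁻¹ • 1) + γ⁻¹ • A + γ • (C - γ⁻¹ • 1)) * Ξᵀ
        + (γ * γ⁻¹) • 1 := by
        rw [add_mul, mul_add, mul_add]
        rw [show Ξ * A * Ξᵀ * (Ξ * (C - γ⁻¹ • 1) * Ξᵀ)
            = Ξ * (A * (C - γ⁻¹ • 1)) * Ξᵀ by
          rw [Matrix.mul_assoc (Ξ * A) Ξᵀ _, Matrix.mul_assoc Ξ (C - γ⁻¹ • 1) Ξᵀ, hcancel,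
            Matrix.mul_assoc Ξ A _, Matrix.mul_assoc Ξ (A * (C - γ⁻¹ • 1)) Ξᵀ,
            Matrix.mul_assoc A _ Ξᵀ]]
        simp only [Matrix.mul_one, Matrix.one_mul, Matrix.add_mul, Matrix.mul_add,
          Matrix.smul_mul, Matrix.mul_smul, smul_smul, Matrix.mul_assoc, mul_inv_cancel₀ hγ,
          inv_mul_cancel₀ hγ]
        abel
    _ = 1 := by
        rw [hkey, Matrix.mul_zero, Matrix.zero_mul, zero_add, mul_inv_cancel₀ hγ, one_smul]

private lemma dot_sum_smul_aux {ι : Type*} [Fintype ι] {P : ℕ} (v : ι → ℝ) (c : Fin P → ℝ)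
    (f : Fin P → ι → ℝ) : v ⬝ᵥ (∑ i, c i • f i) = ∑ i, c i * (v ⬝ᵥ f i) := by
  simp only [dotProduct, Finset.sum_apply, Pi.smul_apply, smul_eq_mul, Finset.mul_sum]
  rw [Finset.sum_comm]
  exact Finset.sum_congr rfl fun i _ => Finset.sum_congr rfl fun x _ => by ring

/-- A vector orthogonal to all eigenvectors spanning the column space of a symmetric
matrix is in its kernel. -/
private lemma kernel_orthogonal_aux {ι : Type*} [Fintype ι] [DecidableEq ι] {P : ℕ}
    (K : Matrix ι ι ℝ) (hKsym : Kᵀ = K)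
    (u : Fin P → ι → ℝ) (lam : Fin P → ℝ)
    (huortho : ∀ i j, u i ⬝ᵥ u j = if i = j then (1:ℝ) else 0)
    (heig : ∀ i, K.mulVec (u i) = lam i • u i) (hpos : ∀ i, 0 < lam i)
    (hrank : P = K.rank) (w : ι → ℝ) (hw : ∀ p, u p ⬝ᵥ w = 0) :
    K.mulVec w = 0 := by
  have hind : LinearIndependent ℝ u := by
    rw [Fintype.linearIndependent_iff]
    intro g hg p
    have h := congrArg (fun v => u p ⬝ᵥ v) hg
    simp only [dot_sum_smul_aux, huortho, dotProduct_zero, mul_ite, mul_one, mul_zero,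
      Finset.sum_ite_eq] at h
    simpa using h
  have hmem : ∀ p, u p ∈ LinearMap.range K.mulVecLin := by
    intro p
    refine ⟨(lam p)⁻¹ • u p, ?_⟩
    simp [Matrix.mulVecLin_apply, Matrix.mulVec_smul, heig, smul_smul,
      inv_mul_cancel₀ (hpos p).ne']
  have hle : Submodule.span ℝ (Set.range u) ≤ LinearMap.range K.mulVecLin :=
    Submodule.span_le.2 (Set.range_subset_iff.2 hmem)
  have hspan : Submodule.span ℝ (Set.range u) = LinearMap.range K.mulVecLin := by
    apply Submodule.eq_of_le_of_finrank_le hle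
    rw [finrank_span_eq_card hind, Fintype.card_fin]
    exact le_of_eq hrank.symm
  have hmem2 : K.mulVec w ∈ Submodule.span ℝ (Set.range u) := by
    rw [hspan]; exact ⟨w, rfl⟩
  obtain ⟨c, hc⟩ := (Submodule.mem_span_range_iff_exists_fun ℝ).1 hmem2
  have horth : ∀ p, u p ⬝ᵥ K.mulVec w = 0 := by
    intro p
    rw [Matrix.dotProduct_mulVec]
    have h2 : u p ᵥ* K = lam p • u p := by
      rw [← hKsym, Matrix.vecMul_transpose, heig]
    rw [h2, smul_dotProduct, hw, smul_eq_mul, mul_zero]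
  have hzero : K.mulVec w ⬝ᵥ K.mulVec w = 0 := by
    nth_rewrite 2 [← hc]
    rw [dot_sum_smul_aux]
    exact Finset.sum_eq_zero fun p _ => by rw [dotProduct_comm, horth, mul_zero]
  exact dotProduct_self_eq_zero.1 hzero

private lemma posDef_smul_aux {k : Type*} [Fintype k] [DecidableEq k]
    {A : Matrix k k ℝ} (hA : A.PosDef) {c : ℝ} (hc : 0 < c) : (c • A).PosDef := by
  constructor
  · show (c • A)ᴴ = c • A
    rw [Matrix.conjTranspose_smul, star_trivial, hA.1.eq]
  · intro x hx
    convert mul_pos hc (hA.2 hx) using 1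
    simp only [Finsupp.sum, Finset.mul_sum, Matrix.smul_apply, smul_eq_mul]
    exact Finset.sum_congr rfl fun i _ => Finset.sum_congr rfl fun j _ => by ring

private lemma inv_ratio_aux {a b p q : ℝ} (ha : a ≠ 0) (hb : b ≠ 0) (hp : p ≠ 0)
    (hq : q ≠ 0) (h : a * p⁻¹ = b * q⁻¹) : a⁻¹ = b⁻¹ * (q / p) := by
  field_simp at h ⊢
  linear_combination -h

private lemma rpow_ratio_aux (x si sj r : ℝ) (hx : 0 < x) (hsi : 0 < si) (hsj : 0 < sj)
    (hr : 0 < r) :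
    (x⁻¹ * r) ^ ((1:ℝ)/2) / ((si * r) ^ ((1:ℝ)/4) * (sj * r) ^ ((1:ℝ)/4))
      = x⁻¹ ^ ((1:ℝ)/2) / (si ^ ((1:ℝ)/4) * sj ^ ((1:ℝ)/4)) := by
  rw [Real.mul_rpow (by positivity) hr.le, Real.mul_rpow hsi.le hr.le,
    Real.mul_rpow hsj.le hr.le]
  have h : r ^ ((1:ℝ)/4) * r ^ ((1:ℝ)/4) = r ^ ((1:ℝ)/2) := by
    rw [← Real.rpow_add hr]; norm_num
  have hd : si ^ ((1:ℝ)/4) * r ^ ((1:ℝ)/4) * (sj ^ ((1:ℝ)/4) * r ^ ((1:ℝ)/4))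
      = si ^ ((1:ℝ)/4) * sj ^ ((1:ℝ)/4) * r ^ ((1:ℝ)/2) := by
    rw [← h]; ring
  rw [hd, mul_comm (x⁻¹ ^ ((1:ℝ)/2)) (r ^ ((1:ℝ)/2))]
  rw [mul_comm (si ^ ((1:ℝ)/4) * sj ^ ((1:ℝ)/4)) (r ^ ((1:ℝ)/2))]
  rw [mul_div_mul_left _ _ (ne_of_gt (Real.rpow_pos_of_pos hr _))]

end AuxLemmas

/-- Linearization of the FLG kernel over a joint feature space of
`M` graphs: for each pair of graphs, the FLG kernel computed from the full
feature-space matrices `S_g = Φ_g L_g⁻¹ Φ_gᵀ + γI` equals the kernel computed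
from the projected matrices `S̄_g = Q_gᵀ L_g⁻¹ Q_g + γI`. -/
theorem flg_kernel_joint_basis_linearization {m M P : ℕ} (n : Fin M → ℕ)
    (Φ : Matrix (Fin m) ((g : Fin M) × Fin (n g)) ℝ)
    (K : Matrix ((g : Fin M) × Fin (n g)) ((g : Fin M) × Fin (n g)) ℝ)
    (hK : K = Φᵀ * Φ)
    (u : Fin P → (((g : Fin M) × Fin (n g)) → ℝ)) (lam : Fin P → ℝ)
    (huortho : ∀ i j, u i ⬝ᵥ u j = if i = j then (1 : ℝ) else 0)
    (heig : ∀ i, K.mulVec (u i) = lam i • u i)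
    (hpos : ∀ i, 0 < lam i)
    (hrank : P = K.rank)
    (Q : Matrix ((g : Fin M) × Fin (n g)) (Fin P) ℝ)
    (hQ : ∀ v i, Q v i = Real.sqrt (lam i) * u i v)
    (Φg : (g : Fin M) → Matrix (Fin m) (Fin (n g)) ℝ)
    (hΦg : ∀ g, Φg g = Φ.submatrix id (fun j => ⟨g, j⟩))
    (Qg : (g : Fin M) → Matrix (Fin (n g)) (Fin P) ℝ)
    (hQg : ∀ g, Qg g = Q.submatrix (fun j => ⟨g, j⟩) id)
    (L : (g : Fin M) → Matrix (Fin (n g)) (Fin (n g)) ℝ)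
    (hL : ∀ g, (L g).PosDef)
    (γ : ℝ) (hγ : 0 < γ)
    (S : (g : Fin M) → Matrix (Fin m) (Fin m) ℝ)
    (hS : ∀ g, S g = Φg g * (L g)⁻¹ * (Φg g)ᵀ + γ • (1 : Matrix (Fin m) (Fin m) ℝ))
    (Sbar : (g : Fin M) → Matrix (Fin P) (Fin P) ℝ)
    (hSbar : ∀ g, Sbar g = (Qg g)ᵀ * (L g)⁻¹ * Qg g + γ • (1 : Matrix (Fin P) (Fin P) ℝ)) :
    ∀ i j : Fin M, lgKernel (S i) (S j) = lgKernel (Sbar i) (Sbar j) := by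
  have hKsym : Kᵀ = K := by rw [hK, Matrix.transpose_mul, Matrix.transpose_transpose]
  -- the matrix of eigenvectors
  set U : Matrix ((g : Fin M) × Fin (n g)) (Fin P) ℝ := Matrix.of fun v p => u p v with hU
  have hUtU : Uᵀ * U = 1 := by
    ext p q
    simpa [hU, Matrix.mul_apply, Matrix.one_apply, dotProduct] using huortho p q
  have hKU : K * U = U * Matrix.diagonal lam := by
    ext v p
    have h := congrFun (heig p) v
    simp only [Matrix.mulVec, dotProduct, Pi.smul_apply, smul_eq_mul] at h
    rw [Matrix.mul_diagonal]
    simpa [hU, Matrix.mul_apply, mul_comm] using h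
  set sl : Fin P → ℝ := fun p => Real.sqrt (lam p) with hsldef
  have hsl : ∀ p, 0 < sl p := fun p => Real.sqrt_pos.2 (hpos p)
  have hsl2 : ∀ p, sl p * sl p = lam p := fun p => Real.mul_self_sqrt (hpos p).le
  set Dinv : Matrix (Fin P) (Fin P) ℝ := Matrix.diagonal fun p => (sl p)⁻¹ with hDinv
  set Ξ : Matrix (Fin m) (Fin P) ℝ := Φ * U * Dinv with hΞ
  have hQU : Q = U * Matrix.diagonal sl := by
    ext v p
    rw [Matrix.mul_diagonal]
    simp [hQ, hU, hsldef, mul_comm]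
  have hUKU : Uᵀ * K * U = Matrix.diagonal lam := by
    rw [Matrix.mul_assoc, hKU, ← Matrix.mul_assoc, hUtU, Matrix.one_mul]
  have hΞtΞ : Ξᵀ * Ξ = 1 := by
    have h1 : Ξᵀ * Ξ = Dinv * (Uᵀ * K * U) * Dinv := by
      rw [hK]
      simp [hΞ, hDinv, Matrix.transpose_mul, Matrix.diagonal_transpose, Matrix.mul_assoc]
    rw [h1, hUKU, hDinv, Matrix.diagonal_mul_diagonal, Matrix.diagonal_mul_diagonal]
    have hfun : (fun i => (sl i)⁻¹ * lam i * (sl i)⁻¹) = fun _ => (1:ℝ) := by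
      funext p
      have h2 := (hsl p).ne'
      rw [← hsl2 p]
      field_simp
    rw [hfun, Matrix.diagonal_one]
  -- orthogonal projection property : Φ * U * Uᵀ = Φ
  set Rm : Matrix ((g : Fin M) × Fin (n g)) ((g : Fin M) × Fin (n g)) ℝ := 1 - U * Uᵀ
    with hRm
  have hUtR : Uᵀ * Rm = 0 := by
    rw [hRm, Matrix.mul_sub, Matrix.mul_one, ← Matrix.mul_assoc, hUtU, Matrix.one_mul,
      sub_self]
  have hKR : K * Rm = 0 := by
    ext v j
    have hw : ∀ p, u p ⬝ᵥ (fun k => Rm k j) = 0 := by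
      intro p
      have h : (Uᵀ * Rm) p j = (0 : Matrix (Fin P) ((g : Fin M) × Fin (n g)) ℝ) p j := by
        rw [hUtR]
      simpa [Matrix.mul_apply, dotProduct, hU] using h
    have h0 := kernel_orthogonal_aux K hKsym u lam huortho heig hpos hrank _ hw
    have h1 : (K * Rm) v j = K.mulVec (fun k => Rm k j) v := by
      simp [Matrix.mul_apply, Matrix.mulVec, dotProduct]
    rw [h1, h0]
    simp
  have hsymR : Rmᵀ = Rm := by
    rw [hRm]
    simp [Matrix.transpose_sub, Matrix.transpose_mul]
  have hMtM : (Φ * Rm)ᵀ * (Φ * Rm) = 0 := by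
    rw [Matrix.transpose_mul, hsymR, Matrix.mul_assoc, ← Matrix.mul_assoc Φᵀ Φ _, ← hK, hKR,
      Matrix.mul_zero]
  have hΦR : Φ * Rm = 0 := by
    have hH : (Φ * Rm)ᴴ = (Φ * Rm)ᵀ := by
      ext a b; simp [Matrix.conjTranspose_apply]
    exact Matrix.conjTranspose_mul_self_eq_zero.1 (by rw [hH]; exact hMtM)
  have hUUt : Φ * (U * Uᵀ) = Φ := by
    have h := hΦR
    rw [hRm, Matrix.mul_sub, Matrix.mul_one, sub_eq_zero] at h
    exact h.symm
  -- Φ factors through Ξ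
  have hΦΞQ : Φ = Ξ * Qᵀ := by
    have hDD : Dinv * Matrix.diagonal sl = 1 := by
      rw [hDinv, Matrix.diagonal_mul_diagonal]
      have hfun : (fun i => (sl i)⁻¹ * sl i) = fun _ => (1:ℝ) := by
        funext p
        exact inv_mul_cancel₀ (hsl p).ne'
      rw [hfun, Matrix.diagonal_one]
    rw [hQU, Matrix.transpose_mul, Matrix.diagonal_transpose]
    calc Φ = Φ * (U * Uᵀ) := hUUt.symm
      _ = Ξ * (Matrix.diagonal sl * Uᵀ) := by
          rw [hΞ, Matrix.mul_assoc (Φ * U) Dinv _, ← Matrix.mul_assoc Dinv _ _, hDD,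
            Matrix.one_mul, Matrix.mul_assoc]
  have hΦgΞ : ∀ g, Φg g = Ξ * (Qg g)ᵀ := by
    intro g
    rw [hΦg g, hQg g]
    ext a b
    conv_lhs => rw [hΦΞQ]
    simp [Matrix.mul_apply]
  -- the projected quadratic parts
  set A' : (g : Fin M) → Matrix (Fin P) (Fin P) ℝ :=
    fun g => (Qg g)ᵀ * (L g)⁻¹ * Qg g with hA'
  have hS2 : ∀ g, S g = Ξ * A' g * Ξᵀ + γ • 1 := by
    intro g
    rw [hS g, hΦgΞ g]
    congr 1
    rw [Matrix.transpose_mul, Matrix.transpose_transpose]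
    simp [hA', Matrix.mul_assoc]
  have hSbar2 : ∀ g, Sbar g = A' g + γ • 1 := fun g => by rw [hSbar g]
  -- positivity facts
  have hγ1 : ∀ {k : ℕ}, (γ • (1 : Matrix (Fin k) (Fin k) ℝ)).PosDef := by
    intro k
    rw [Matrix.smul_one_eq_diagonal]
    exact Matrix.posDef_diagonal_iff.2 fun _ => hγ
  have hApsd : ∀ g, (A' g).PosSemidef := by
    intro g
    have h1 : ((L g)⁻¹).PosSemidef := ((hL g).inv).posSemidef
    have h2 := h1.conjTranspose_mul_mul_same (Qg g)
    have hct : (Qg g)ᴴ = (Qg g)ᵀ := by ext a b; simp [Matrix.conjTranspose_apply]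
    rwa [hct] at h2
  have hSbarPD : ∀ g, (Sbar g).PosDef := by
    intro g
    rw [hSbar2 g]
    exact Matrix.PosDef.posSemidef_add (hApsd g) hγ1
  have hSPD : ∀ g, (S g).PosDef := by
    intro g
    rw [hS2 g]
    have h1 := (hApsd g).mul_mul_conjTranspose_same Ξ
    have hct : Ξᴴ = Ξᵀ := by ext a b; simp [Matrix.conjTranspose_apply]
    rw [hct] at h1
    exact Matrix.PosDef.posSemidef_add h1 hγ1
  have hSbarUnit : ∀ g, IsUnit (A' g + γ • (1 : Matrix (Fin P) (Fin P) ℝ)).det := by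
    intro g
    rw [← hSbar2 g]
    exact (hSbarPD g).det_pos.ne'.isUnit
  have hSinv : ∀ g, (S g)⁻¹ = Ξ * ((Sbar g)⁻¹ - γ⁻¹ • 1) * Ξᵀ + γ⁻¹ • 1 := by
    intro g
    rw [hS2 g, inv_conj_aux Ξ hΞtΞ (A' g) γ hγ.ne' (hSbarUnit g), ← hSbar2 g]
  intro i j
  -- the combined matrices
  set B : Matrix (Fin P) (Fin P) ℝ :=
    (1/2 : ℝ) • ((Sbar i)⁻¹ - γ⁻¹ • 1) + (1/2 : ℝ) • ((Sbar j)⁻¹ - γ⁻¹ • 1) with hB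
  have hT : (1/2 : ℝ) • (S i)⁻¹ + (1/2 : ℝ) • (S j)⁻¹ = Ξ * B * Ξᵀ + γ⁻¹ • 1 := by
    rw [hSinv i, hSinv j, hB]
    simp only [smul_add, smul_sub, smul_smul, Matrix.mul_add, Matrix.add_mul, Matrix.mul_sub,
      Matrix.sub_mul, Matrix.smul_mul, Matrix.mul_smul, Matrix.mul_one, Matrix.one_mul]
    module
  have hTbarB : B + γ⁻¹ • 1 = (1/2 : ℝ) • (Sbar i)⁻¹ + (1/2 : ℝ) • (Sbar j)⁻¹ := by
    rw [hB]
    module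
  -- determinant identities
  have hdetS : ∀ g, (S g).det * γ ^ P = (Sbar g).det * γ ^ m := by
    intro g
    rw [hS2 g, hSbar2 g]
    exact det_conj_aux Ξ hΞtΞ (A' g) γ hγ.ne'
  have hdetT : ((1/2 : ℝ) • (S i)⁻¹ + (1/2 : ℝ) • (S j)⁻¹).det * (γ⁻¹) ^ P
      = ((1/2 : ℝ) • (Sbar i)⁻¹ + (1/2 : ℝ) • (Sbar j)⁻¹).det * (γ⁻¹) ^ m := by
    rw [hT, ← hTbarB]
    exact det_conj_aux Ξ hΞtΞ B γ⁻¹ (inv_ne_zero hγ.ne')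
  -- positivity of determinants
  have hhalf : (0:ℝ) < 1/2 := by norm_num
  have hTbarPD : ((1/2 : ℝ) • (Sbar i)⁻¹ + (1/2 : ℝ) • (Sbar j)⁻¹).PosDef :=
    (posDef_smul_aux (hSbarPD i).inv hhalf).add (posDef_smul_aux (hSbarPD j).inv hhalf)
  set r : ℝ := γ ^ m / γ ^ P with hr
  have hrpos : 0 < r := div_pos (pow_pos hγ m) (pow_pos hγ P)
  have hγP : (γ:ℝ) ^ P ≠ 0 := (pow_pos hγ P).ne'
  have hγm : (γ:ℝ) ^ m ≠ 0 := (pow_pos hγ m).ne'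
  have hTPD : ((1/2 : ℝ) • (S i)⁻¹ + (1/2 : ℝ) • (S j)⁻¹).PosDef :=
    (posDef_smul_aux (hSPD i).inv hhalf).add (posDef_smul_aux (hSPD j).inv hhalf)
  have hdetS' : ∀ g, (S g).det = (Sbar g).det * r := by
    intro g
    have h := hdetS g
    rw [hr]
    field_simp
    linear_combination h
  have hdetTinv : (((1/2 : ℝ) • (S i)⁻¹ + (1/2 : ℝ) • (S j)⁻¹).det)⁻¹
      = (((1/2 : ℝ) • (Sbar i)⁻¹ + (1/2 : ℝ) • (Sbar j)⁻¹).det)⁻¹ * r := by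
    have h := hdetT
    rw [inv_pow, inv_pow] at h
    rw [hr]
    exact inv_ratio_aux hTPD.det_pos.ne' hTbarPD.det_pos.ne' hγP hγm h
  unfold lgKernel
  rw [Matrix.det_nonsing_inv, Matrix.det_nonsing_inv, Ring.inverse_eq_inv']
  rw [hdetTinv, hdetS' i, hdetS' j]
  exact rpow_ratio_aux _ _ _ _ hTbarPD.det_pos (hSbarPD i).det_pos (hSbarPD j).det_pos hrpos
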